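/- arXiv:0809.2093 — 5 statements merged into one kernel-verified Lean document; each statement's English description precedes it below -/
import Mathlib

section
/- Define γ₂(A) = max over unit vectors u ∈ ℝⁿ, v ∈ ℝᵐ of ‖A ∘ (v uᵀ)‖_tr. Then for any nonzero real m×n matrix A, rk(A) ≥ γ₂(A)² / ‖A‖_∞², where ‖A‖_∞ is the maximum absolute value of an entry of A. -/
open Matrix Finset

noncomputable def traceNorm {m n : ℕ} (A : Matrix (Fin m) (Fin n) ℝ) : ℝ :=
  ∑ i, Real.sqrt ((show (Aᵀ * A).IsHermitian by
    simpa [Matrix.conjTranspose_eq_transpose_of_trivial] using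
      Matrix.isHermitian_conjTranspose_mul_self A).eigenvalues i)

noncomputable def linfNorm {m n : ℕ} (A : Matrix (Fin m) (Fin n) ℝ) : ℝ :=
  ⨆ i, ⨆ j, |A i j|

noncomputable def gamma2 {m n : ℕ} (A : Matrix (Fin m) (Fin n) ℝ) : ℝ :=
  sSup { t | ∃ (u : Fin n → ℝ) (v : Fin m → ℝ), (∑ j, (u j) ^ 2 = 1) ∧ (∑ i, (v i) ^ 2 = 1) ∧
      t = traceNorm (Matrix.hadamard A (Matrix.vecMulVec v u)) }

lemma trace_eq_sum_eigs {k : ℕ} (A : Matrix (Fin k) (Fin k) ℝ) (hA : A.IsHermitian) :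
    A.trace = ∑ i, hA.eigenvalues i := by
  simpa using hA.trace_eq_sum_eigenvalues

lemma traceNorm_nonneg {m n : ℕ} (A : Matrix (Fin m) (Fin n) ℝ) : 0 ≤ traceNorm A := by
  unfold traceNorm
  exact Finset.sum_nonneg fun _ _ => Real.sqrt_nonneg _

lemma abs_le_linf {m n : ℕ} (A : Matrix (Fin m) (Fin n) ℝ) (i : Fin m) (j : Fin n) :
    |A i j| ≤ linfNorm A := by
  have h1 : |A i j| ≤ ⨆ j', |A i j'| :=
    le_ciSup (f := fun j' => |A i j'|) (Set.Finite.bddAbove (Set.finite_range _)) j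
  exact h1.trans (le_ciSup (f := fun i' => ⨆ j', |A i' j'|)
    (Set.Finite.bddAbove (Set.finite_range _)) i)

lemma traceNorm_sq_le {m n : ℕ} (M : Matrix (Fin m) (Fin n) ℝ) :
    traceNorm M ^ 2 ≤ (M.rank : ℝ) * ∑ j, ∑ i, (M i j) ^ 2 := by
  classical
  set ev := (Matrix.isHermitian_conjTranspose_mul_self M).eigenvalues with hev
  have hnn : ∀ i, 0 ≤ ev i := fun i =>
    Matrix.eigenvalues_conjTranspose_mul_self_nonneg M i
  set s : Finset (Fin n) := univ.filter (fun i => ev i ≠ 0) with hs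
  have h1 : traceNorm M = ∑ i ∈ s, Real.sqrt (ev i) := by
    rw [traceNorm]
    refine (Finset.sum_subset (Finset.filter_subset _ _) ?_).symm
    intro x _ hx
    simp only [hs, Finset.mem_filter, Finset.mem_univ, true_and, not_not] at hx
    change Real.sqrt (ev x) = 0
    rw [hx, Real.sqrt_zero]
  have hcard : (s.card : ℝ) = (M.rank : ℝ) := by
    have := (Matrix.isHermitian_conjTranspose_mul_self M).rank_eq_card_non_zero_eigs
    rw [Matrix.rank_conjTranspose_mul_self] at this
    rw [this, Fintype.card_subtype]
  have hCS : (∑ i ∈ s, Real.sqrt (ev i)) ^ 2 ≤ (s.card : ℝ) * ∑ i ∈ s, Real.sqrt (ev i) ^ 2 :=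
    sq_sum_le_card_mul_sum_sq
  have h2 : ∑ i ∈ s, Real.sqrt (ev i) ^ 2 = ∑ i ∈ s, ev i := by
    refine Finset.sum_congr rfl fun i _ => Real.sq_sqrt (hnn i)
  have h3 : ∑ i ∈ s, ev i ≤ ∑ i, ev i :=
    Finset.sum_le_sum_of_subset_of_nonneg (Finset.subset_univ _) (fun i _ _ => hnn i)
  have h4 : ∑ i, ev i = ∑ j, ∑ i, (M i j) ^ 2 := by
    rw [← trace_eq_sum_eigs _ (Matrix.isHermitian_conjTranspose_mul_self M)]
    simp [Matrix.trace, Matrix.diag, Matrix.mul_apply, Matrix.conjTranspose_apply, sq]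
  calc traceNorm M ^ 2 = (∑ i ∈ s, Real.sqrt (ev i)) ^ 2 := by rw [h1]
    _ ≤ (s.card : ℝ) * ∑ i ∈ s, Real.sqrt (ev i) ^ 2 := hCS
    _ = (M.rank : ℝ) * ∑ i ∈ s, ev i := by rw [hcard, h2]
    _ ≤ (M.rank : ℝ) * ∑ i, ev i := by
        exact mul_le_mul_of_nonneg_left h3 (Nat.cast_nonneg _)
    _ = (M.rank : ℝ) * ∑ j, ∑ i, (M i j) ^ 2 := by rw [h4]

lemma key {m n : ℕ} (A : Matrix (Fin m) (Fin n) ℝ) (u : Fin n → ℝ) (v : Fin m → ℝ)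
    (hu : ∑ j, (u j) ^ 2 = 1) (hv : ∑ i, (v i) ^ 2 = 1) :
    traceNorm (Matrix.hadamard A (Matrix.vecMulVec v u)) ≤
      Real.sqrt (A.rank : ℝ) * linfNorm A := by
  classical
  set M := Matrix.hadamard A (Matrix.vecMulVec v u) with hM
  set L := linfNorm A with hL
  have him : Nonempty (Fin m) := by
    rcases Nat.eq_zero_or_pos m with h | h
    · subst h; simp at hv
    · exact ⟨⟨0, h⟩⟩
  have hin : Nonempty (Fin n) := by
    rcases Nat.eq_zero_or_pos n with h | h
    · subst h; simp at hu
    · exact ⟨⟨0, h⟩⟩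
  have hL0 : 0 ≤ L := le_trans (abs_nonneg _) (abs_le_linf A him.some hin.some)
  -- rank bound
  have hfac : M = (Matrix.diagonal v * A) * Matrix.diagonal u := by
    ext i j
    simp [hM, Matrix.hadamard, Matrix.vecMulVec_apply, Matrix.mul_diagonal,
      Matrix.diagonal_mul, mul_comm, mul_assoc, mul_left_comm]
  have hrank : (M.rank : ℝ) ≤ (A.rank : ℝ) := by
    have : M.rank ≤ A.rank := by
      rw [hfac]
      exact le_trans (Matrix.rank_mul_le_left _ _) (Matrix.rank_mul_le_right _ _)
    exact_mod_cast this
  -- Frobenius bound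
  have hentry : ∀ i j, (M i j) ^ 2 ≤ L ^ 2 * ((v i) ^ 2 * (u j) ^ 2) := by
    intro i j
    have h1 : M i j = A i j * (v i * u j) := rfl
    have h2 : (A i j) ^ 2 ≤ L ^ 2 := by
      have := abs_le_linf A i j
      nlinarith [abs_nonneg (A i j), sq_abs (A i j)]
    have h3 : M i j ^ 2 = (A i j) ^ 2 * ((v i) ^ 2 * (u j) ^ 2) := by rw [h1]; ring
    rw [h3]
    exact mul_le_mul_of_nonneg_right h2 (mul_nonneg (sq_nonneg _) (sq_nonneg _))
  have hfrob : ∑ j, ∑ i, (M i j) ^ 2 ≤ L ^ 2 := by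
    calc ∑ j, ∑ i, (M i j) ^ 2
        ≤ ∑ j, ∑ i, L ^ 2 * ((v i) ^ 2 * (u j) ^ 2) :=
          Finset.sum_le_sum fun j _ => Finset.sum_le_sum fun i _ => hentry i j
      _ = L ^ 2 := by
          have hinner : ∀ j, ∑ i, L ^ 2 * ((v i) ^ 2 * (u j) ^ 2) = L ^ 2 * (u j) ^ 2 := by
            intro j
            calc ∑ i, L ^ 2 * ((v i) ^ 2 * (u j) ^ 2)
                = (L ^ 2 * (u j) ^ 2) * ∑ i, (v i) ^ 2 := by
                  rw [Finset.mul_sum]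
                  exact Finset.sum_congr rfl fun i _ => by ring
              _ = L ^ 2 * (u j) ^ 2 := by rw [hv, mul_one]
          calc ∑ j, ∑ i, L ^ 2 * ((v i) ^ 2 * (u j) ^ 2)
              = ∑ j, L ^ 2 * (u j) ^ 2 := Finset.sum_congr rfl fun j _ => hinner j
            _ = L ^ 2 := by rw [← Finset.mul_sum, hu, mul_one]
  have hsq : traceNorm M ^ 2 ≤ (A.rank : ℝ) * L ^ 2 := by
    calc traceNorm M ^ 2 ≤ (M.rank : ℝ) * ∑ j, ∑ i, (M i j) ^ 2 := traceNorm_sq_le M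
      _ ≤ (A.rank : ℝ) * L ^ 2 := by
          apply mul_le_mul hrank hfrob (Finset.sum_nonneg fun j _ =>
            Finset.sum_nonneg fun i _ => sq_nonneg _) (Nat.cast_nonneg _)
  have h0 : 0 ≤ traceNorm M := traceNorm_nonneg M
  have := Real.sqrt_le_sqrt hsq
  rw [Real.sqrt_sq h0] at this
  refine this.trans (le_of_eq ?_)
  rw [Real.sqrt_mul (Nat.cast_nonneg _), Real.sqrt_sq hL0]

theorem rank_ge_gamma2_sq_div_linf_sq {m n : ℕ} (A : Matrix (Fin m) (Fin n) ℝ)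
    (hA : A ≠ 0) :
    (A.rank : ℝ) ≥ gamma2 A ^ 2 / linfNorm A ^ 2 := by
  obtain ⟨i0, j0, hij⟩ : ∃ i j, A i j ≠ 0 := by
    by_contra h
    push_neg at h
    exact hA (by ext i j; simp [h])
  have hL : 0 < linfNorm A := lt_of_lt_of_le (abs_pos.mpr hij) (abs_le_linf A i0 j0)
  have hg : gamma2 A ≤ Real.sqrt (A.rank : ℝ) * linfNorm A := by
    apply Real.sSup_le
    · rintro t ⟨u, v, hu, hv, rfl⟩
      exact key A u v hu hv
    · positivity
  have hg0 : 0 ≤ gamma2 A := by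
    apply Real.sSup_nonneg
    rintro t ⟨u, v, hu, hv, rfl⟩
    exact traceNorm_nonneg _
  rw [ge_iff_le, div_le_iff₀ (by positivity)]
  calc gamma2 A ^ 2 ≤ (Real.sqrt (A.rank : ℝ) * linfNorm A) ^ 2 :=
        pow_le_pow_left₀ hg0 hg 2
    _ = (A.rank : ℝ) * linfNorm A ^ 2 := by
        rw [mul_pow, Real.sq_sqrt (Nat.cast_nonneg _)]
end

section
/- Fix ε > 0. Let a₃ = 1/(2 + 6ε + 4ε²) and a₁ = 1 + a₃, and define p(x) = a₁x − a₃x³. Then p is odd, and p maps [−1−2ε, −1] into [−1−ε, −1]. -/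
open Matrix Finset

theorem poly_odd_and_neg_interval (ε a₁ a₃ : ℝ) (hε : 0 < ε)
    (ha₃ : a₃ = 1 / (2 + 6 * ε + 4 * ε ^ 2)) (ha₁ : a₁ = 1 + a₃) :
    (∀ x : ℝ, a₁ * (-x) - a₃ * (-x) ^ 3 = -(a₁ * x - a₃ * x ^ 3)) ∧
    (∀ x : ℝ, -1 - 2 * ε ≤ x → x ≤ -1 →
      -1 - ε ≤ a₁ * x - a₃ * x ^ 3 ∧ a₁ * x - a₃ * x ^ 3 ≤ -1) := by
  have hD : (0:ℝ) < 2 + 6 * ε + 4 * ε ^ 2 := by nlinarith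
  have ha : a₃ * (2 + 6 * ε + 4 * ε ^ 2) = 1 := by
    rw [ha₃]; field_simp
  have ha₃pos : 0 < a₃ := by rw [ha₃]; positivity
  refine ⟨fun x => by ring, fun x h1 h2 => ?_⟩
  set t : ℝ := -(x + 1) with htdef
  have ht0 : 0 ≤ t := by simp [htdef]; linarith
  have ht2 : t ≤ 2 * ε := by simp [htdef]; linarith
  have hident : a₁ * x - a₃ * x ^ 3 + 1 =
      -(a₃ * (t * (2 * ε - t) * (3 + 2 * ε + t))) := by
    rw [ha₁]; simp only [htdef]; linear_combination -(x + 1) * ha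
  have hstuff : 0 ≤ t * (2 * ε - t) * (3 + 2 * ε + t) := by
    apply mul_nonneg (mul_nonneg ht0 (by linarith)) (by linarith)
  have hkey : t * (2 * ε - t) * (3 + 2 * ε + t) ≤ ε * (2 + 6 * ε + 4 * ε ^ 2) := by
    nlinarith [sq_nonneg (t - ε), sq_nonneg ε, mul_pos hε hε]
  have h3 : a₃ * (t * (2 * ε - t) * (3 + 2 * ε + t)) ≤ ε := by
    calc a₃ * (t * (2 * ε - t) * (3 + 2 * ε + t))
        ≤ a₃ * (ε * (2 + 6 * ε + 4 * ε ^ 2)) :=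
          mul_le_mul_of_nonneg_left hkey ha₃pos.le
      _ = ε := by linear_combination ε * ha
  have h4 : 0 ≤ a₃ * (t * (2 * ε - t) * (3 + 2 * ε + t)) := mul_nonneg ha₃pos.le hstuff
  constructor <;> linarith
end

section
/- For every ε ≥ 0, with a₃ = 1/(2 + 6ε + 4ε²), the inequality (2/(3√3)) · (1+a₃)^{3/2} / √a₃ ≤ 1 + ε holds. Equivalently, (2/(3√3)) · √(2+6ε+4ε²)/(1+ε) · ((3+6ε+4ε²)/(2+6ε+4ε²))^{3/2} ≤ 1. -/
open Matrix Finset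

theorem key_inequality (ε a₃ : ℝ) (hε : 0 ≤ ε)
    (ha₃ : a₃ = 1 / (2 + 6 * ε + 4 * ε ^ 2)) :
    2 / (3 * Real.sqrt 3) * Real.sqrt ((1 + a₃) ^ 3) / Real.sqrt a₃ ≤ 1 + ε := by
  have hD : (0:ℝ) < 2 + 6 * ε + 4 * ε ^ 2 := by nlinarith
  have ha : 0 < a₃ := by rw [ha₃]; positivity
  have h1a : (0:ℝ) < 1 + a₃ := by linarith
  set e := 2 / (3 * Real.sqrt 3) * Real.sqrt ((1 + a₃) ^ 3) / Real.sqrt a₃ with he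
  have he0 : 0 ≤ e := by positivity
  have h3 : Real.sqrt 3 ^ 2 = 3 := Real.sq_sqrt (by norm_num)
  have hA : Real.sqrt ((1 + a₃) ^ 3) ^ 2 = (1 + a₃) ^ 3 := Real.sq_sqrt (by positivity)
  have hB : Real.sqrt a₃ ^ 2 = a₃ := Real.sq_sqrt ha.le
  have hesq : e ^ 2 = 4 / 27 * (1 + a₃) ^ 3 / a₃ := by
    rw [he, div_pow, mul_pow, div_pow, mul_pow, hA, hB, h3]
    norm_num
  have hpoly : 4 * (2 + 6 * ε + 4 * ε ^ 2 + 1) ^ 3 ≤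
      27 * (1 + ε) ^ 2 * (2 + 6 * ε + 4 * ε ^ 2) ^ 2 := by
    nlinarith [hε, mul_nonneg hε hε, pow_nonneg hε 3, pow_nonneg hε 4,
      pow_nonneg hε 5, pow_nonneg hε 6]
  have key : e ^ 2 ≤ (1 + ε) ^ 2 := by
    rw [hesq, ha₃, div_le_iff₀ (by positivity)]
    have h2 : (1 : ℝ) + 1 / (2 + 6 * ε + 4 * ε ^ 2) =
        (2 + 6 * ε + 4 * ε ^ 2 + 1) / (2 + 6 * ε + 4 * ε ^ 2) := by
      field_simp
    rw [h2, div_pow, mul_div_assoc', div_le_iff₀ (by positivity)]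
    have : (1 + ε) ^ 2 * (1 / (2 + 6 * ε + 4 * ε ^ 2)) * (2 + 6 * ε + 4 * ε ^ 2) ^ 3
        = (1 + ε) ^ 2 * (2 + 6 * ε + 4 * ε ^ 2) ^ 2 := by
      field_simp
    rw [this]
    nlinarith [hpoly]
  calc e = Real.sqrt (e ^ 2) := (Real.sqrt_sq he0).symm
    _ ≤ Real.sqrt ((1 + ε) ^ 2) := Real.sqrt_le_sqrt key
    _ = 1 + ε := Real.sqrt_sq (by linarith)
end

section
/- Let A be an m×n sign matrix and 1 < α. If A' is a real matrix of rank r with 1 ≤ A[i,j]·A'[i,j] ≤ 2α−1 for all i,j, then there exists a real matrix A'' of rank at most 2r³ with 1 ≤ A[i,j]·A''[i,j] ≤ α for all i,j. Consequently rk_α(A) ≤ 2·rk_{2α−1}(A)³. -/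
open Matrix Finset

noncomputable def approxRank {m n : ℕ} (A : Matrix (Fin m) (Fin n) ℝ) (α : ℝ) : ℕ :=
  sInf { r | ∃ B : Matrix (Fin m) (Fin n) ℝ, B.rank = r ∧
      ∀ i j, 1 ≤ A i j * B i j ∧ A i j * B i j ≤ α }

private lemma er_exists_fact {m n : ℕ} (A : Matrix (Fin m) (Fin n) ℝ) :
    ∃ (U : Matrix (Fin m) (Fin A.rank) ℝ) (V : Matrix (Fin A.rank) (Fin n) ℝ), A = U * V := by
  set S : Submodule ℝ (Fin m → ℝ) := Submodule.span ℝ (Set.range Aᵀ) with hS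
  have hfr : Module.finrank ℝ S = A.rank := (A.rank_eq_finrank_span_cols).symm
  let b : Module.Basis (Fin A.rank) ℝ S := Module.finBasisOfFinrankEq ℝ S hfr
  have hmem : ∀ j, Aᵀ j ∈ S := fun j => Submodule.subset_span ⟨j, rfl⟩
  refine ⟨Matrix.of fun i k => (b k : Fin m → ℝ) i,
    Matrix.of fun k j => b.repr ⟨Aᵀ j, hmem j⟩ k, ?_⟩
  ext i j
  have h := b.sum_repr ⟨Aᵀ j, hmem j⟩
  have h2 := congrArg (fun x : S => (x : Fin m → ℝ) i) h
  simp only [AddSubmonoidClass.coe_finset_sum, SetLike.val_smul, Finset.sum_apply,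
    Pi.smul_apply, smul_eq_mul] at h2
  rw [Matrix.transpose_apply] at h2
  simp only [Matrix.mul_apply, Matrix.of_apply]
  rw [← h2]
  exact Finset.sum_congr rfl fun k _ => mul_comm _ _

private lemma er_rank_hadamard_le {m n : ℕ} (A B : Matrix (Fin m) (Fin n) ℝ) :
    (A ⊙ B).rank ≤ A.rank * B.rank := by
  obtain ⟨U, V, hUV⟩ := er_exists_fact A
  obtain ⟨W, Z, hWZ⟩ := er_exists_fact B
  have key : A ⊙ B = (Matrix.of fun i (p : Fin A.rank × Fin B.rank) => U i p.1 * W i p.2) *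
      (Matrix.of fun (p : Fin A.rank × Fin B.rank) j => V p.1 j * Z p.2 j) := by
    ext i j
    simp only [Matrix.hadamard_apply, Matrix.mul_apply, Matrix.of_apply, hUV, hWZ]
    rw [Finset.sum_mul_sum, ← Finset.univ_product_univ, Finset.sum_product]
    exact Finset.sum_congr rfl fun k _ => Finset.sum_congr rfl fun l _ => by ring
  calc (A ⊙ B).rank ≤ _ := key ▸ Matrix.rank_mul_le_left _ _
    _ ≤ Fintype.card (Fin A.rank × Fin B.rank) := Matrix.rank_le_card_width _
    _ = A.rank * B.rank := by simp

private lemma er_rank_add_le {m n : ℕ} (A B : Matrix (Fin m) (Fin n) ℝ) :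
    (A + B).rank ≤ A.rank + B.rank := by
  unfold Matrix.rank
  rw [Matrix.mulVecLin_add]
  have hle : LinearMap.range (A.mulVecLin + B.mulVecLin) ≤
      LinearMap.range A.mulVecLin ⊔ LinearMap.range B.mulVecLin := by
    rintro x ⟨y, rfl⟩
    exact Submodule.add_mem_sup ⟨y, rfl⟩ ⟨y, rfl⟩
  calc Module.finrank ℝ (LinearMap.range (A.mulVecLin + B.mulVecLin))
      ≤ Module.finrank ℝ ↥(LinearMap.range A.mulVecLin ⊔ LinearMap.range B.mulVecLin) :=
        Submodule.finrank_mono hle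
    _ ≤ _ := Submodule.finrank_add_le_finrank_add_finrank _ _

private lemma er_rank_smul_le {m n : ℕ} (c : ℝ) (A : Matrix (Fin m) (Fin n) ℝ) :
    (c • A).rank ≤ A.rank := by
  have : c • A = (c • (1 : Matrix (Fin m) (Fin m) ℝ)) * A := by
    rw [Matrix.smul_mul, Matrix.one_mul]
  rw [this]
  exact Matrix.rank_mul_le_right _ _

private lemma er_poly_bound (α t : ℝ) (hα : 1 < α) (h1 : 1 ≤ t) (h2 : t ≤ 2 * α - 1) :
    1 ≤ (1 + 1 / (2 + 6 * (α - 1) + 4 * (α - 1) ^ 2)) * t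
        - (1 / (2 + 6 * (α - 1) + 4 * (α - 1) ^ 2)) * t ^ 3 ∧
    (1 + 1 / (2 + 6 * (α - 1) + 4 * (α - 1) ^ 2)) * t
        - (1 / (2 + 6 * (α - 1) + 4 * (α - 1) ^ 2)) * t ^ 3 ≤ α := by
  have hε : 0 < α - 1 := by linarith
  set D : ℝ := 2 + 6 * (α - 1) + 4 * (α - 1) ^ 2 with hD
  have hDpos : 0 < D := by positivity
  have hform : (1 + 1 / D) * t - (1 / D) * t ^ 3 = ((D + 1) * t - t ^ 3) / D := by
    field_simp
  rw [hform]
  constructor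
  · rw [le_div_iff₀ hDpos]
    nlinarith [mul_nonneg (sub_nonneg.2 h1) (sub_nonneg.2 h2),
      mul_nonneg (mul_nonneg (sub_nonneg.2 h1) (sub_nonneg.2 h2))
        (show (0:ℝ) ≤ t + (2 * α - 1) by linarith)]
  · rw [div_le_iff₀ hDpos]
    nlinarith [mul_nonneg (sq_nonneg (t - α)) (show (0:ℝ) ≤ t + 2 by linarith),
      mul_nonneg hε.le (sq_nonneg (4 * t + 1 - 5 * α)),
      mul_pos hε hε, mul_pos (mul_pos hε hε) hε]

private lemma er_key {m n : ℕ} (A : Matrix (Fin m) (Fin n) ℝ)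
    (hA : ∀ i j, A i j = 1 ∨ A i j = -1) (α : ℝ) (hα : 1 < α)
    (A' : Matrix (Fin m) (Fin n) ℝ) (r : ℕ) (hr : A'.rank = r)
    (happrox : ∀ i j, 1 ≤ A i j * A' i j ∧ A i j * A' i j ≤ 2 * α - 1) :
    ∃ A'' : Matrix (Fin m) (Fin n) ℝ, A''.rank ≤ 2 * r ^ 3 ∧
      ∀ i j, 1 ≤ A i j * A'' i j ∧ A i j * A'' i j ≤ α := by
  set a₃ : ℝ := 1 / (2 + 6 * (α - 1) + 4 * (α - 1) ^ 2) with ha₃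
  set A'' : Matrix (Fin m) (Fin n) ℝ :=
    (1 + a₃) • A' + (-a₃) • (A' ⊙ (A' ⊙ A')) with hA''
  refine ⟨A'', ?_, ?_⟩
  · have h1 : (A' ⊙ (A' ⊙ A')).rank ≤ r ^ 3 := by
      calc (A' ⊙ (A' ⊙ A')).rank ≤ A'.rank * (A' ⊙ A').rank := er_rank_hadamard_le _ _
        _ ≤ A'.rank * (A'.rank * A'.rank) :=
            Nat.mul_le_mul_left _ (er_rank_hadamard_le _ _)
        _ = r ^ 3 := by rw [hr]; ring
    calc A''.rank ≤ ((1 + a₃) • A').rank + ((-a₃) • (A' ⊙ (A' ⊙ A'))).rank :=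
          er_rank_add_le _ _
      _ ≤ A'.rank + (A' ⊙ (A' ⊙ A')).rank :=
          Nat.add_le_add (er_rank_smul_le _ _) (er_rank_smul_le _ _)
      _ ≤ r + r ^ 3 := by rw [hr]; exact Nat.add_le_add_left h1 _
      _ ≤ 2 * r ^ 3 := by
          have : r ≤ r ^ 3 := Nat.le_self_pow (by norm_num) r
          omega
  · intro i j
    obtain ⟨hb1, hb2⟩ := happrox i j
    have hsq : A i j * A i j = 1 := by rcases hA i j with h | h <;> rw [h] <;> norm_num
    have hval : A i j * A'' i j =
        (1 + a₃) * (A i j * A' i j) - a₃ * (A i j * A' i j) ^ 3 := by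
      simp only [hA'', Matrix.add_apply, Matrix.smul_apply, Matrix.hadamard_apply, smul_eq_mul]
      linear_combination (a₃ * A i j * A' i j ^ 3) * hsq
    obtain ⟨hp1, hp2⟩ := er_poly_bound α (A i j * A' i j) hα hb1 hb2
    rw [hval]
    exact ⟨hp1, hp2⟩

theorem error_reduction {m n : ℕ} (A : Matrix (Fin m) (Fin n) ℝ)
    (hA : ∀ i j, A i j = 1 ∨ A i j = -1) (α : ℝ) (hα : 1 < α)
    (A' : Matrix (Fin m) (Fin n) ℝ) (r : ℕ) (hr : A'.rank = r)
    (happrox : ∀ i j, 1 ≤ A i j * A' i j ∧ A i j * A' i j ≤ 2 * α - 1) :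
    (∃ A'' : Matrix (Fin m) (Fin n) ℝ, A''.rank ≤ 2 * r ^ 3 ∧
      ∀ i j, 1 ≤ A i j * A'' i j ∧ A i j * A'' i j ≤ α) ∧
    approxRank A α ≤ 2 * (approxRank A (2 * α - 1)) ^ 3 := by
  refine ⟨er_key A hA α hα A' r hr happrox, ?_⟩
  -- the set for 2α-1 is nonempty (witness A itself)
  have hself : ∀ i j, 1 ≤ A i j * A i j ∧ A i j * A i j ≤ 2 * α - 1 := by
    intro i j
    have hsq : A i j * A i j = 1 := by rcases hA i j with h | h <;> rw [h] <;> norm_num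
    rw [hsq]
    exact ⟨le_refl 1, by linarith⟩
  have hne : { s | ∃ B : Matrix (Fin m) (Fin n) ℝ, B.rank = s ∧
      ∀ i j, 1 ≤ A i j * B i j ∧ A i j * B i j ≤ 2 * α - 1 }.Nonempty :=
    ⟨A.rank, A, rfl, hself⟩
  have hmem := Nat.sInf_mem hne
  obtain ⟨B, hBrank, hBbounds⟩ := hmem
  obtain ⟨A'', hA''rank, hA''bounds⟩ :=
    er_key A hA α hα B (approxRank A (2 * α - 1)) hBrank hBbounds
  calc approxRank A α ≤ A''.rank := Nat.sInf_le ⟨A'', rfl, hA''bounds⟩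
    _ ≤ 2 * (approxRank A (2 * α - 1)) ^ 3 := hA''rank
end

section
/- Let A be an m×n sign matrix and α ≥ 1. Define ν^α(A) as the minimum over matrices A' with 1 ≤ A[i,j]·A'[i,j] ≤ α for all i,j of ν(A'), where ν(B) = min Σᵢ|cᵢ| over representations B = Σᵢ cᵢ xᵢ yᵢᵀ with xᵢ ∈ {−1,+1}^m, yᵢ ∈ {−1,+1}^n. Then for any 0 < t < 1, there exists a matrix B of rank at most ⌈2 ν^α(A)² ln(4mn)/t²⌉ such that 1 ≤ A[i,j]·B[i,j] ≤ (α+t)/(1−t) for all i,j. In particular, rk_{(α+t)/(1−t)}(A) ≤ 2 ν^α(A)² ln(4mn)/t² + 1. -/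
open Matrix Finset

noncomputable def nu {m n : ℕ} (B : Matrix (Fin m) (Fin n) ℝ) : ℝ :=
  sInf { s | ∃ (k : ℕ) (c : Fin k → ℝ) (x : Fin k → Fin m → ℝ) (y : Fin k → Fin n → ℝ),
      (∀ i j, x i j = 1 ∨ x i j = -1) ∧ (∀ i j, y i j = 1 ∨ y i j = -1) ∧
      B = ∑ i, c i • Matrix.vecMulVec (x i) (y i) ∧ s = ∑ i, |c i| }

noncomputable def nuApprox {m n : ℕ} (A : Matrix (Fin m) (Fin n) ℝ) (α : ℝ) : ℝ :=
  sInf { s | ∃ B : Matrix (Fin m) (Fin n) ℝ,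
      (∀ i j, 1 ≤ A i j * B i j ∧ A i j * B i j ≤ α) ∧ s = nu B }

open Real

lemma two_point_mgf (u : ℝ) (hu1 : -1 ≤ u) (hu2 : u ≤ 1) (h : ℝ) :
    (1+u)/2 * exp h + (1-u)/2 * exp (-h) ≤ exp (h*u + h^2/2) := by
  set G : ℝ → ℝ := fun z => (1+u)/2 * exp z + (1-u)/2 * exp (-z) with hGdef
  set G' : ℝ → ℝ := fun z => (1+u)/2 * exp z - (1-u)/2 * exp (-z) with hG'def
  have hc1 : (0:ℝ) ≤ (1+u)/2 := by linarith
  have hc2 : (0:ℝ) ≤ (1-u)/2 := by linarith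
  have hGpos : ∀ z, 0 < G z := by
    intro z
    rcases lt_or_eq_of_le hu2 with hlt | heq
    · have : 0 < (1-u)/2 * exp (-z) := mul_pos (by linarith) (exp_pos _)
      have h2 : 0 ≤ (1+u)/2 * exp z := by positivity
      simp only [hGdef]; linarith
    · have : (1+u)/2 = 1 := by rw [← heq]; ring
      simp only [hGdef, this]
      nlinarith [exp_pos z, exp_pos (-z), hc2]
  have hGd : ∀ z, HasDerivAt G (G' z) z := by
    intro z
    have h1 : HasDerivAt (fun z : ℝ => exp z) (exp z) z := Real.hasDerivAt_exp z
    have h2 : HasDerivAt (fun z : ℝ => exp (-z)) (-exp (-z)) z := by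
      simpa [Function.comp_def] using (Real.hasDerivAt_exp (-z)).comp z (hasDerivAt_neg z)
    have := ((h1.const_mul ((1+u)/2)).add (h2.const_mul ((1-u)/2)))
    simpa [hGdef, hG'def, mul_comm, sub_eq_add_neg, mul_neg, Pi.add_def, Pi.neg_def] using this
  have hG'd : ∀ z, HasDerivAt G' (G z) z := by
    intro z
    have h1 : HasDerivAt (fun z : ℝ => exp z) (exp z) z := Real.hasDerivAt_exp z
    have h2 : HasDerivAt (fun z : ℝ => exp (-z)) (-exp (-z)) z := by
      simpa [Function.comp_def] using (Real.hasDerivAt_exp (-z)).comp z (hasDerivAt_neg z)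
    have := ((h1.const_mul ((1+u)/2)).sub (h2.const_mul ((1-u)/2)))
    simpa [hGdef, hG'def, mul_comm, sub_eq_add_neg, mul_neg, Pi.add_def, Pi.neg_def] using this
  set F : ℝ → ℝ := fun z => z*u + z^2/2 - log (G z) with hFdef
  set D : ℝ → ℝ := fun z => u + z - G' z / G z with hDdef
  have hFd : ∀ z, HasDerivAt F (D z) z := by
    intro z
    have hlog : HasDerivAt (fun z => log (G z)) (G' z / G z) z :=
      (hGd z).log (hGpos z).ne'
    have h1 : HasDerivAt (fun z : ℝ => z*u + z^2/2) (u + z) z := by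
      have ha : HasDerivAt (fun z : ℝ => z*u) u z := by
        simpa using (hasDerivAt_id z).mul_const u
      have hb : HasDerivAt (fun z : ℝ => z^2/2) z z := by
        have := (hasDerivAt_pow 2 z).div_const 2
        simpa using this
      exact ha.add hb
    simpa [hFdef, hDdef, Pi.sub_def] using h1.sub hlog
  have hDd : ∀ z, HasDerivAt D ((G' z / G z)^2) z := by
    intro z
    have hq : HasDerivAt (fun z => G' z / G z) ((G z * G z - G' z * G' z) / (G z)^2) z :=
      (hG'd z).div (hGd z) (hGpos z).ne'
    have h1 : HasDerivAt (fun z : ℝ => u + z) 1 z := by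
      simpa using (hasDerivAt_id z).const_add u
    have : HasDerivAt (fun z => u + z - G' z / G z) (1 - (G z * G z - G' z * G' z) / (G z)^2) z :=
      h1.sub hq
    convert this using 1
    have hz := (hGpos z).ne'
    field_simp
    ring
  have hDmono : Monotone D := monotone_of_hasDerivAt_nonneg hDd (fun z => sq_nonneg _)
  have hG0 : G 0 = 1 := by simp [hGdef]; ring
  have hG'0 : G' 0 = u := by simp [hG'def]; ring
  have hD0 : D 0 = 0 := by simp [hDdef, hG'0, hG0]
  have hF0 : F 0 = 0 := by simp [hFdef, hG0]
  have key : ∀ z, 0 ≤ F z := by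
    intro z
    rcases le_total 0 z with hz | hz
    · have hmono : MonotoneOn F (Set.Ici 0) := by
        apply monotoneOn_of_hasDerivWithinAt_nonneg (convex_Ici 0)
          (fun x _ => (hFd x).continuousAt.continuousWithinAt)
          (fun x _ => (hFd x).hasDerivWithinAt)
        intro x hx
        rw [interior_Ici] at hx
        have := hDmono (le_of_lt hx)
        rw [hD0] at this
        exact this
      have := hmono (Set.self_mem_Ici) (Set.mem_Ici.mpr hz) hz
      rwa [hF0] at this
    · have hanti : AntitoneOn F (Set.Iic 0) := by
        apply antitoneOn_of_hasDerivWithinAt_nonpos (convex_Iic 0)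
          (fun x _ => (hFd x).continuousAt.continuousWithinAt)
          (fun x _ => (hFd x).hasDerivWithinAt)
        intro x hx
        rw [interior_Iic] at hx
        have := hDmono (le_of_lt hx)
        rw [hD0] at this
        exact this
      have := hanti (Set.mem_Iic.mpr hz) (Set.self_mem_Iic) hz
      rwa [hF0] at this
    
  have := key h
  have hlog : log (G h) ≤ h*u + h^2/2 := by simp only [hFdef] at this; linarith
  calc G h ≤ exp (log (G h)) := by rw [exp_log (hGpos h)]
    _ ≤ exp (h*u + h^2/2) := exp_le_exp.mpr hlog

lemma mgf_bound {k : ℕ} (p : Fin k → ℝ) (hp0 : ∀ l, 0 ≤ p l) (hp1 : ∑ l, p l = 1)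
    (g : Fin k → ℝ) (hg : ∀ l, g l = 1 ∨ g l = -1) (h : ℝ) :
    ∑ l, p l * exp (h * g l) ≤ exp (h * (∑ l, p l * g l) + h^2/2) := by
  classical
  set q := ∑ l ∈ univ.filter (fun l => g l = 1), p l with hq
  set q' := ∑ l ∈ univ.filter (fun l => ¬ g l = 1), p l with hq'
  have hqq' : q + q' = 1 := by rw [hq, hq', Finset.sum_filter_add_sum_filter_not]; exact hp1
  have hq0 : 0 ≤ q := Finset.sum_nonneg fun l _ => hp0 l
  have hq'0 : 0 ≤ q' := Finset.sum_nonneg fun l _ => hp0 l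
  have hmean : ∑ l, p l * g l = q - q' := by
    rw [← Finset.sum_filter_add_sum_filter_not univ (fun l => g l = 1) (fun l => p l * g l)]
    congr 1
    · rw [hq, Finset.sum_congr rfl]; intro l hl
      rw [(Finset.mem_filter.mp hl).2, mul_one]
    · rw [hq', ← Finset.sum_neg_distrib, Finset.sum_congr rfl]
      intro l hl
      have := (hg l).resolve_left (Finset.mem_filter.mp hl).2
      rw [this]; ring
  have hsum : ∑ l, p l * exp (h * g l) = q * exp h + q' * exp (-h) := by
    rw [← Finset.sum_filter_add_sum_filter_not univ (fun l => g l = 1)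
      (fun l => p l * exp (h * g l))]
    congr 1
    · rw [hq, Finset.sum_mul, Finset.sum_congr rfl]; intro l hl
      rw [(Finset.mem_filter.mp hl).2, mul_one]
    · rw [hq', Finset.sum_mul, Finset.sum_congr rfl]; intro l hl
      have := (hg l).resolve_left (Finset.mem_filter.mp hl).2
      rw [this]; ring_nf
  set u := q - q' with hu
  have h1 : q = (1+u)/2 := by rw [hu]; linarith
  have h2 : q' = (1-u)/2 := by rw [hu]; linarith
  rw [hsum, hmean, h1, h2]
  exact two_point_mgf u (by rw [hu]; linarith) (by rw [hu]; linarith) h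

lemma chernoff {k : ℕ} (d : ℕ) (hd : 0 < d) (p : Fin k → ℝ) (hp0 : ∀ l, 0 ≤ p l)
    (hp1 : ∑ l, p l = 1) (g : Fin k → ℝ) (hg : ∀ l, g l = 1 ∨ g l = -1)
    (ν t θ : ℝ) (hν : 0 < ν) (ht : 0 < t) (hθ : θ = 1 ∨ θ = -1) :
    ∑ ω : Fin d → Fin k,
      (if t ≤ θ * ((ν/d) * ∑ r, g (ω r) - ν * ∑ l, p l * g l) then ∏ r, p (ω r) else 0)
      ≤ Real.exp (-(d*t^2)/(2*ν^2)) := by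
  classical
  set μ := ν * ∑ l, p l * g l with hμ
  set lam := d * t / ν^2 with hlam
  set h := t * θ / ν with hh
  have hθ2 : θ^2 = 1 := by rcases hθ with h1 | h1 <;> rw [h1] <;> norm_num
  have hd0 : (0:ℝ) < d := Nat.cast_pos.mpr hd
  have hlam0 : 0 ≤ lam := by positivity
  have hfac : lam * θ * (ν/(d:ℝ)) = h := by
    rw [hlam, hh]; field_simp
  have hrw : ∀ ω : Fin d → Fin k,
      exp (lam * (θ * ((ν/d) * ∑ r, g (ω r) - μ) - t)) * ∏ r, p (ω r)
        = exp (-(lam*t) - lam*θ*μ) * ∏ r, (p (ω r) * exp (h * g (ω r))) := by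
    intro ω
    have e1 : ∏ r, (p (ω r) * exp (h * g (ω r)))
        = (∏ r, p (ω r)) * exp (∑ r, h * g (ω r)) := by
      rw [Finset.prod_mul_distrib, Real.exp_sum]
    have h2 : lam * (θ * ((ν/(d:ℝ)) * ∑ r, g (ω r) - μ) - t)
        = (-(lam*t) - lam*θ*μ) + h * ∑ r, g (ω r) := by
      linear_combination (∑ r, g (ω r)) * hfac
    rw [e1, ← Finset.mul_sum, h2, Real.exp_add]
    ring
  calc ∑ ω : Fin d → Fin k,
      (if t ≤ θ * ((ν/d) * ∑ r, g (ω r) - μ) then ∏ r, p (ω r) else 0)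
      ≤ ∑ ω : Fin d → Fin k,
          exp (-(lam*t) - lam*θ*μ) * ∏ r, (p (ω r) * exp (h * g (ω r))) := by
        apply Finset.sum_le_sum
        intro ω _
        rw [← hrw ω]
        split_ifs with hcond
        · have h1 : (1:ℝ) ≤ exp (lam * (θ * ((ν/d) * ∑ r, g (ω r) - μ) - t)) :=
            Real.one_le_exp (by nlinarith)
          nlinarith [Finset.prod_nonneg (fun r (_ : r ∈ univ) => hp0 (ω r)), h1]
        · exact mul_nonneg (exp_pos _).le (Finset.prod_nonneg fun r _ => hp0 _)
    _ = exp (-(lam*t) - lam*θ*μ) * (∑ l, p l * exp (h * g l))^d := by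
        rw [← Finset.mul_sum]
        congr 1
        exact (Fintype.sum_pow (fun l => p l * exp (h * g l)) d).symm
    _ ≤ exp (-(lam*t) - lam*θ*μ) * (exp (h * (∑ l, p l * g l) + h^2/2))^d := by
        apply mul_le_mul_of_nonneg_left _ (le_of_lt (exp_pos _))
        apply pow_le_pow_left₀ _ (mgf_bound p hp0 hp1 g hg h)
        exact Finset.sum_nonneg fun l _ => mul_nonneg (hp0 _) (exp_pos _).le
    _ = Real.exp (-(d*t^2)/(2*ν^2)) := by
        rw [← Real.exp_nat_mul, ← Real.exp_add]
        congr 1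
        rcases hθ with h1 | h1 <;> subst h1 <;> (rw [hlam, hh, hμ]; field_simp; ring)

lemma exists_good {m n k : ℕ} (d : ℕ) (hd : 0 < d)
    (p : Fin k → ℝ) (hp0 : ∀ l, 0 ≤ p l) (hp1 : ∑ l, p l = 1)
    (g : Fin m → Fin n → Fin k → ℝ) (hg : ∀ i j l, g i j l = 1 ∨ g i j l = -1)
    (ν t : ℝ) (hν : 0 < ν) (ht : 0 < t)
    (hbig : (m : ℝ) * n * 2 * Real.exp (-(d*t^2)/(2*ν^2)) < 1) :
    ∃ ω : Fin d → Fin k, ∀ i j,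
      |(ν/d) * ∑ r, g i j (ω r) - ν * ∑ l, p l * g i j l| < t := by
  classical
  by_contra hcon
  push_neg at hcon
  set W : (Fin d → Fin k) → ℝ := fun ω => ∏ r, p (ω r) with hW
  have hW0 : ∀ ω, 0 ≤ W ω := fun ω => Finset.prod_nonneg fun r _ => hp0 _
  have hWtot : ∑ ω : Fin d → Fin k, W ω = 1 := by
    have := Fintype.sum_pow p d
    rw [hp1, one_pow] at this
    exact this.symm
  have hcover : ∀ ω : Fin d → Fin k, ∃ τ : Fin m × Fin n × Bool,
      t ≤ (if τ.2.2 then (1:ℝ) else -1) *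
        ((ν/d) * ∑ r, g τ.1 τ.2.1 (ω r) - ν * ∑ l, p l * g τ.1 τ.2.1 l) := by
    intro ω
    obtain ⟨i, j, hij⟩ := hcon ω
    rcases le_abs.mp hij with h1 | h1
    · exact ⟨(i, j, true), by simpa using h1⟩
    · exact ⟨(i, j, false), by simpa using h1⟩
  have step1 : (1:ℝ) ≤ ∑ τ : Fin m × Fin n × Bool, ∑ ω : Fin d → Fin k,
      if t ≤ (if τ.2.2 then (1:ℝ) else -1) *
        ((ν/d) * ∑ r, g τ.1 τ.2.1 (ω r) - ν * ∑ l, p l * g τ.1 τ.2.1 l)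
      then W ω else 0 := by
    have h1 : ∀ ω : Fin d → Fin k, W ω ≤ ∑ τ : Fin m × Fin n × Bool,
        if t ≤ (if τ.2.2 then (1:ℝ) else -1) *
          ((ν/d) * ∑ r, g τ.1 τ.2.1 (ω r) - ν * ∑ l, p l * g τ.1 τ.2.1 l)
        then W ω else 0 := by
      intro ω
      obtain ⟨τ0, hτ0⟩ := hcover ω
      have := Finset.single_le_sum (f := fun τ : Fin m × Fin n × Bool =>
        if t ≤ (if τ.2.2 then (1:ℝ) else -1) *
          ((ν/d) * ∑ r, g τ.1 τ.2.1 (ω r) - ν * ∑ l, p l * g τ.1 τ.2.1 l)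
        then W ω else 0)
        (fun τ _ => by
                       split_ifs <;> first | exact hW0 ω | exact le_rfl) (Finset.mem_univ τ0)
      rwa [if_pos hτ0] at this
    calc (1:ℝ) = ∑ ω : Fin d → Fin k, W ω := hWtot.symm
      _ ≤ _ := Finset.sum_le_sum fun ω _ => h1 ω
      _ = _ := Finset.sum_comm
  have step2 : ∀ τ : Fin m × Fin n × Bool,
      (∑ ω : Fin d → Fin k,
        if t ≤ (if τ.2.2 then (1:ℝ) else -1) *
          ((ν/d) * ∑ r, g τ.1 τ.2.1 (ω r) - ν * ∑ l, p l * g τ.1 τ.2.1 l)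
        then W ω else 0)
        ≤ Real.exp (-(d*t^2)/(2*ν^2)) := by
    rintro ⟨i, j, b⟩
    exact chernoff d hd p hp0 hp1 (g i j) (hg i j) ν t (if b then 1 else -1) hν ht
      (by cases b <;> simp)
  have step3 : ∑ τ : Fin m × Fin n × Bool, (∑ ω : Fin d → Fin k,
      if t ≤ (if τ.2.2 then (1:ℝ) else -1) *
        ((ν/d) * ∑ r, g τ.1 τ.2.1 (ω r) - ν * ∑ l, p l * g τ.1 τ.2.1 l)
      then W ω else 0) ≤ (m:ℝ) * n * 2 * Real.exp (-(d*t^2)/(2*ν^2)) := by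
    calc _ ≤ ∑ _τ : Fin m × Fin n × Bool, Real.exp (-(d*t^2)/(2*ν^2)) :=
          Finset.sum_le_sum fun τ _ => step2 τ
      _ = (m:ℝ) * n * 2 * Real.exp (-(d*t^2)/(2*ν^2)) := by
          rw [Finset.sum_const, Finset.card_univ]
          simp only [Fintype.card_prod, Fintype.card_fin, Fintype.card_bool, nsmul_eq_mul]
          push_cast
          ring
  linarith

lemma repSet_nonempty {m n : ℕ} (B : Matrix (Fin m) (Fin n) ℝ) :
    { s | ∃ (k : ℕ) (c : Fin k → ℝ) (x : Fin k → Fin m → ℝ) (y : Fin k → Fin n → ℝ),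
      (∀ i j, x i j = 1 ∨ x i j = -1) ∧ (∀ i j, y i j = 1 ∨ y i j = -1) ∧
      B = ∑ i, c i • Matrix.vecMulVec (x i) (y i) ∧ s = ∑ i, |c i| }.Nonempty := by
  classical
  set ι := Fin m × Fin n × Bool × Bool with hι
  set e := Fintype.equivFin ι with he
  set k := Fintype.card ι with hk
  set C : ι → ℝ := fun τ => B τ.1 τ.2.1 / 4 with hC
  set X : ι → Fin m → ℝ := fun τ i' => if τ.2.2.1 then (if i' = τ.1 then 1 else -1) else 1 with hX
  set Y : ι → Fin n → ℝ := fun τ j' => if τ.2.2.2 then (if j' = τ.2.1 then 1 else -1) else 1 with hY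
  refine ⟨∑ a : Fin k, |C (e.symm a)|, k, fun a => C (e.symm a), fun a => X (e.symm a),
    fun a => Y (e.symm a), ?_, ?_, ?_, rfl⟩
  · intro a i'; simp only [hX]; split_ifs <;> simp
  · intro a j'; simp only [hY]; split_ifs <;> simp
  · ext i' j'
    rw [show (∑ a : Fin k, C (e.symm a) • Matrix.vecMulVec (X (e.symm a)) (Y (e.symm a)))
        = ∑ τ : ι, C τ • Matrix.vecMulVec (X τ) (Y τ) from
      Fintype.sum_equiv e.symm _ _ (fun a => rfl)]
    simp only [Matrix.sum_apply, Matrix.smul_apply, Matrix.vecMulVec_apply, smul_eq_mul]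
    rw [show (∑ τ : ι, C τ * (X τ i' * Y τ j'))
        = ∑ i : Fin m, ∑ j : Fin n, ∑ b₁ : Bool, ∑ b₂ : Bool,
            C (i, j, b₁, b₂) * (X (i, j, b₁, b₂) i' * Y (i, j, b₁, b₂) j') from by
      rw [Fintype.sum_prod_type]
      exact Finset.sum_congr rfl fun i _ => by
        rw [Fintype.sum_prod_type]
        exact Finset.sum_congr rfl fun j _ => by rw [Fintype.sum_prod_type]]
    have hinner : ∀ i j, (∑ b₁ : Bool, ∑ b₂ : Bool,
        C (i, j, b₁, b₂) * (X (i, j, b₁, b₂) i' * Y (i, j, b₁, b₂) j'))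
        = (if i = i' then (1:ℝ) else 0) * (if j = j' then (1:ℝ) else 0) * B i j := by
      intro i j
      simp only [Fintype.sum_bool, hC, hX, hY, if_true, if_false]
      split_ifs with h1 h2 h2 <;> simp_all <;> ring
    rw [Finset.sum_congr rfl fun i _ => Finset.sum_congr rfl fun j _ => hinner i j]
    simp

lemma rep_entry_abs_le {m n k : ℕ} (c : Fin k → ℝ) (x : Fin k → Fin m → ℝ)
    (y : Fin k → Fin n → ℝ) (hx : ∀ i j, x i j = 1 ∨ x i j = -1)
    (hy : ∀ i j, y i j = 1 ∨ y i j = -1) (i : Fin m) (j : Fin n) :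
    |∑ l, c l * (x l i * y l j)| ≤ ∑ l, |c l| := by
  refine le_trans (Finset.abs_sum_le_sum_abs _ _) (Finset.sum_le_sum fun l _ => ?_)
  rw [abs_mul, abs_mul]
  have h1 : |x l i| = 1 := by rcases hx l i with h | h <;> simp [h]
  have h2 : |y l j| = 1 := by rcases hy l j with h | h <;> simp [h]
  rw [h1, h2]
  simp

lemma sum_entry {m n k : ℕ} (c : Fin k → ℝ) (x : Fin k → Fin m → ℝ)
    (y : Fin k → Fin n → ℝ) (i : Fin m) (j : Fin n) :
    (∑ l, c l • Matrix.vecMulVec (x l) (y l)) i j = ∑ l, c l * (x l i * y l j) := by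
  simp [Matrix.sum_apply, Matrix.vecMulVec_apply]

lemma one_le_nu {m n : ℕ} (B : Matrix (Fin m) (Fin n) ℝ) (i : Fin m) (j : Fin n)
    (hB : 1 ≤ |B i j|) : 1 ≤ nu B := by
  apply le_csInf (repSet_nonempty B)
  rintro s ⟨k, c, x, y, hx, hy, hrep, rfl⟩
  refine le_trans hB (le_trans ?_ (rep_entry_abs_le c x y hx hy i j))
  rw [hrep, sum_entry]

set_option maxHeartbeats 1000000 in
theorem dimension_reduction {m n : ℕ} (hm : 0 < m) (hn : 0 < n)
    (A : Matrix (Fin m) (Fin n) ℝ) (hA : ∀ i j, A i j = 1 ∨ A i j = -1)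
    (α : ℝ) (hα : 1 ≤ α) (t : ℝ) (ht0 : 0 < t) (ht1 : t < 1) :
    (∃ B : Matrix (Fin m) (Fin n) ℝ,
        B.rank ≤ ⌈2 * nuApprox A α ^ 2 * Real.log (4 * m * n) / t ^ 2⌉₊ ∧
        ∀ i j, 1 ≤ A i j * B i j ∧ A i j * B i j ≤ (α + t) / (1 - t)) ∧
    (approxRank A ((α + t) / (1 - t)) : ℝ) ≤
      2 * nuApprox A α ^ 2 * Real.log (4 * m * n) / t ^ 2 + 1 := by
  classical
  have hm1 : (1:ℝ) ≤ m := by exact_mod_cast hm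
  have hn1 : (1:ℝ) ≤ n := by exact_mod_cast hn
  have i0 : Fin m := ⟨0, hm⟩
  have j0 : Fin n := ⟨0, hn⟩
  set L2 := Real.log (2*(m:ℝ)*n) with hL2def
  set L4 := Real.log (4*(m:ℝ)*n) with hL4def
  have hL2pos : 0 < L2 := Real.log_pos (by nlinarith)
  have hL4pos : 0 < L4 := Real.log_pos (by nlinarith)
  have hL24 : L2 < L4 := Real.log_lt_log (by nlinarith) (by nlinarith)
  set ν := nuApprox A α with hνdef
  -- nonemptiness of the approximator set
  have hSne : { s | ∃ B : Matrix (Fin m) (Fin n) ℝ,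
      (∀ i j, 1 ≤ A i j * B i j ∧ A i j * B i j ≤ α) ∧ s = nu B }.Nonempty := by
    refine ⟨nu (α • A), α • A, fun i j => ?_, rfl⟩
    have : A i j * (α • A) i j = α := by
      rcases hA i j with h | h <;> simp [Matrix.smul_apply, h] <;> ring
    rw [this]
    exact ⟨hα, le_refl α⟩
  have habs : ∀ (B : Matrix (Fin m) (Fin n) ℝ),
      (∀ i j, 1 ≤ A i j * B i j) → ∀ i j, 1 ≤ |B i j| := by
    intro B hB i j
    have h1 := hB i j
    rcases hA i j with h | h <;> rw [h] at h1
    · rw [one_mul] at h1; exact le_trans h1 (le_abs_self _)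
    · have : 1 ≤ -B i j := by linarith
      exact le_trans this (neg_le_abs _)
  have hν1 : (1:ℝ) ≤ ν := by
    apply le_csInf hSne
    rintro s ⟨B, hB, rfl⟩
    exact one_le_nu B i0 j0 (habs B (fun i j => (hB i j).1) i0 j0)
  have hνpos : 0 < ν := lt_of_lt_of_le one_pos hν1
  set τ := ν * Real.sqrt (L4/L2) with hτdef
  have hsq : Real.sqrt (L4/L2) ^ 2 = L4/L2 := Real.sq_sqrt (by positivity)
  have hs1 : 1 < Real.sqrt (L4/L2) := by
    rw [show (1:ℝ) = Real.sqrt 1 by simp]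
    exact Real.sqrt_lt_sqrt (by norm_num) ((one_lt_div hL2pos).mpr hL24)
  have hντ : ν < τ := by nlinarith
  -- pick an approximator B' with nu B' < τ
  obtain ⟨s, hsS, hsτ⟩ := exists_lt_of_csInf_lt hSne (show sInf _ < τ from hντ)
  obtain ⟨B', hB'ap, rfl⟩ := hsS
  -- pick a representation of B' with weight < τ
  obtain ⟨s', hs'S, hs'τ⟩ := exists_lt_of_csInf_lt (repSet_nonempty B')
    (show sInf _ < τ from hsτ)
  obtain ⟨k, c, x, y, hx, hy, hBrep, rfl⟩ := hs'S
  set ν' := ∑ l, |c l| with hν'def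
  have hBentry : ∀ i j, B' i j = ∑ l, c l * (x l i * y l j) := by
    intro i j; rw [hBrep, sum_entry]
  have hν'1 : 1 ≤ ν' := by
    refine le_trans (habs B' (fun i j => (hB'ap i j).1) i0 j0) ?_
    rw [hBentry i0 j0]
    exact rep_entry_abs_le c x y hx hy i0 j0
  have hν'pos : 0 < ν' := lt_of_lt_of_le one_pos hν'1
  have hν'τ : ν' < τ := hs'τ
  set d := ⌈2 * ν ^ 2 * L4 / t ^ 2⌉₊ with hddef
  have hdge : 2 * ν ^ 2 * L4 / t ^ 2 ≤ (d:ℝ) := Nat.le_ceil _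
  have hdpos : 0 < d := Nat.ceil_pos.mpr (by positivity)
  have hd0 : (0:ℝ) < d := Nat.cast_pos.mpr hdpos
  -- probability data
  set p : Fin k → ℝ := fun l => |c l| / ν' with hpdef
  set sg : Fin k → ℝ := fun l => if c l < 0 then -1 else 1 with hsgdef
  set g : Fin m → Fin n → Fin k → ℝ := fun i j l => sg l * x l i * y l j with hgdef
  have hp0 : ∀ l, 0 ≤ p l := fun l => by positivity
  have hp1 : ∑ l, p l = 1 := by
    rw [hpdef, ← Finset.sum_div, ← hν'def, div_self (ne_of_gt hν'pos)]
  have hsgc : ∀ l, sg l * |c l| = c l := by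
    intro l
    by_cases h : c l < 0
    · simp only [hsgdef]
      rw [if_pos h, abs_of_neg h]; ring
    · simp only [hsgdef]
      rw [if_neg h, abs_of_nonneg (not_lt.mp h)]; ring
  have hg : ∀ i j l, g i j l = 1 ∨ g i j l = -1 := by
    intro i j l
    simp only [hgdef]
    have h3 : sg l = 1 ∨ sg l = -1 := by
      by_cases h : c l < 0 <;> simp [hsgdef, h]
    rcases h3 with h3 | h3 <;> rcases hx l i with h4 | h4 <;> rcases hy l j with h5 | h5 <;>
      rw [h3, h4, h5] <;> norm_num
  have hmean : ∀ i j, ν' * ∑ l, p l * g i j l = B' i j := by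
    intro i j
    rw [Finset.mul_sum, hBentry i j]
    refine Finset.sum_congr rfl fun l _ => ?_
    simp only [hpdef, hgdef]
    rw [show ν' * (|c l| / ν' * (sg l * x l i * y l j))
        = (sg l * |c l|) * (x l i * y l j) * (ν'/ν') from by ring,
      div_self (ne_of_gt hν'pos), hsgc l, mul_one]
  have hτ2 : τ ^ 2 = ν ^ 2 * (L4 / L2) := by rw [hτdef, mul_pow, hsq]
  have hbig : (m : ℝ) * n * 2 * Real.exp (-((d:ℝ)*t^2)/(2*ν'^2)) < 1 := by
    have h1 : ν ^ 2 * L4 / τ ^ 2 = L2 := by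
      rw [hτ2]
      field_simp
    have h2 : ν' ^ 2 < τ ^ 2 := by nlinarith
    have h3 : ν ^ 2 * L4 / τ ^ 2 < ν ^ 2 * L4 / ν' ^ 2 :=
      div_lt_div_of_pos_left (by positivity) (by positivity) h2
    have h4 : ν ^ 2 * L4 / ν' ^ 2 ≤ (d:ℝ) * t ^ 2 / (2 * ν' ^ 2) := by
      rw [div_le_div_iff₀ (by positivity) (by positivity)]
      have : 2 * ν ^ 2 * L4 ≤ (d:ℝ) * t ^ 2 := by
        rw [div_le_iff₀ (by positivity)] at hdge
        linarith
      nlinarith [sq_nonneg ν']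
    have h5 : L2 < (d:ℝ) * t ^ 2 / (2 * ν' ^ 2) := by rw [← h1]; linarith
    have h6 : Real.exp (-((d:ℝ)*t^2)/(2*ν'^2)) < Real.exp (-L2) := by
      apply Real.exp_lt_exp.mpr
      rw [neg_div]
      linarith
    have h7 : Real.exp (-L2) = 1 / (2*(m:ℝ)*n) := by
      rw [hL2def, Real.exp_neg, Real.exp_log (by positivity)]
      rw [one_div]
    calc (m : ℝ) * n * 2 * Real.exp (-((d:ℝ)*t^2)/(2*ν'^2))
        < (m : ℝ) * n * 2 * (1 / (2*(m:ℝ)*n)) := by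
          rw [← h7]
          exact mul_lt_mul_of_pos_left h6 (by positivity)
      _ = 1 := by field_simp
  obtain ⟨ω, hω⟩ := exists_good d hdpos p hp0 hp1 g hg ν' t hν'pos ht0 hbig
  have h1t : (0:ℝ) < 1 - t := by linarith
  set P : Matrix (Fin m) (Fin d) ℝ :=
    Matrix.of fun i r => (ν' * sg (ω r) / ((d:ℝ) * (1-t))) * x (ω r) i with hPdef
  set Q : Matrix (Fin d) (Fin n) ℝ := Matrix.of fun r j => y (ω r) j with hQdef
  set B := P * Q with hBdef
  have hBij : ∀ i j, B i j = (1/(1-t)) * ((ν'/(d:ℝ)) * ∑ r, g i j (ω r)) := by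
    intro i j
    rw [hBdef]
    rw [Matrix.mul_apply]
    rw [Finset.mul_sum, Finset.mul_sum]
    refine Finset.sum_congr rfl fun r _ => ?_
    rw [hPdef, hQdef, hgdef]
    simp only [Matrix.of_apply]
    field_simp
  have hrank : B.rank ≤ d := by
    refine le_trans (Matrix.rank_mul_le_left P Q) (le_trans (Matrix.rank_le_card_width P) ?_)
    simp
  have hent : ∀ i j, 1 ≤ A i j * B i j ∧ A i j * B i j ≤ (α + t) / (1 - t) := by
    intro i j
    have hdev := hω i j
    rw [hmean i j] at hdev
    rw [abs_lt] at hdev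
    have h1 := hB'ap i j
    have hAZ : 1 - t ≤ A i j * ((ν'/(d:ℝ)) * ∑ r, g i j (ω r)) ∧
        A i j * ((ν'/(d:ℝ)) * ∑ r, g i j (ω r)) ≤ α + t := by
      rcases hA i j with h | h <;> rw [h] <;> rw [h] at h1 <;> constructor <;> nlinarith
    have hinv : (0:ℝ) < 1/(1-t) := by positivity
    rw [hBij i j]
    have e : A i j * (1/(1-t) * ((ν'/(d:ℝ)) * ∑ r, g i j (ω r)))
        = (A i j * ((ν'/(d:ℝ)) * ∑ r, g i j (ω r))) * (1/(1-t)) := by ring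
    rw [e]
    constructor
    · calc (1:ℝ) = (1-t) * (1/(1-t)) := by field_simp
        _ ≤ _ := mul_le_mul_of_nonneg_right hAZ.1 hinv.le
    · calc _ ≤ (α+t) * (1/(1-t)) := mul_le_mul_of_nonneg_right hAZ.2 hinv.le
        _ = (α+t)/(1-t) := by rw [mul_one_div]
  refine ⟨⟨B, ?_, hent⟩, ?_⟩
  · exact hrank
  · have hmem : B.rank ∈ { r | ∃ B0 : Matrix (Fin m) (Fin n) ℝ, B0.rank = r ∧
        ∀ i j, 1 ≤ A i j * B0 i j ∧ A i j * B0 i j ≤ (α + t) / (1 - t) } :=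
      ⟨B, rfl, hent⟩
    have h8 : approxRank A ((α + t) / (1 - t)) ≤ B.rank := Nat.sInf_le hmem
    have h9 : (approxRank A ((α + t) / (1 - t)) : ℝ) ≤ (d:ℝ) := by
      exact_mod_cast le_trans h8 hrank
    refine le_trans h9 ?_
    have h10 : ((d:ℕ):ℝ) < 2 * ν ^ 2 * L4 / t ^ 2 + 1 := by
      rw [hddef]
      exact Nat.ceil_lt_add_one (by positivity)
    linarith
end
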